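/- There exists an absolute constant c > 0 such that the following holds. Let Σ be a finite set, μ a probability distribution on Σ with full support, n, d ∈ ℕ with d ≥ 1, and ξ > 0 with ξ ≥ 2^{−c·n/d²}. If f : Σ^n → {0,1} satisfies W_{≤d}[f − E[f]] ≥ ξ, where E[f] and the weights are taken over μ^⊗n, then there exist a set I ⊆ [n] with |I| ≥ n/(2d) and a point y ∈ Σ^{[n]∖I} such that E_{z∼μ^I}[f_{\bar I→y}(z)] ≥ E[f] + ξ/(4e). -/

import Mathlib

open scoped Classical BigOperators

noncomputable section

/-- Product weight `μ^{⊗n}(x) = ∏ᵢ μ(xᵢ)` on `Ω^n`. -/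
def wtp {Ω : Type*} [Fintype Ω] (μ : Ω → ℝ) {n : ℕ} (x : Fin n → Ω) : ℝ :=
  ∏ i, μ (x i)

/-- Inner product `⟨f,g⟩ = E_{x∼μ^{⊗n}}[f(x)·conj(g(x))]` on functions `Ω^n → ℂ`. -/
def innerμ {Ω : Type*} [Fintype Ω] (μ : Ω → ℝ) {n : ℕ} (f g : (Fin n → Ω) → ℂ) : ℂ :=
  ∑ x, (wtp μ x : ℂ) * f x * starRingEnd ℂ (g x)

/-- `g` is an `S`-junta: it depends only on the coordinates in `S`. -/
def IsJunta {Ω : Type*} {n : ℕ} (g : (Fin n → Ω) → ℂ) (S : Finset (Fin n)) : Prop :=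
  ∀ x y : Fin n → Ω, (∀ i ∈ S, x i = y i) → g x = g y

/-- Membership in `V_{=S} = V_{⊆S} ∩ ⋂_{T ⊊ S} V_{⊆T}^⊥`. -/
def InVeq {Ω : Type*} [Fintype Ω] (μ : Ω → ℝ) {n : ℕ}
    (g : (Fin n → Ω) → ℂ) (S : Finset (Fin n)) : Prop :=
  IsJunta g S ∧
    ∀ T : Finset (Fin n), T ⊂ S → ∀ h : (Fin n → Ω) → ℂ, IsJunta h T → innerμ μ g h = 0

/-- The squared `L²(μ^{⊗n})`-norm of `g`. -/
def norm2sq {Ω : Type*} [Fintype Ω] (μ : Ω → ℝ) {n : ℕ} (g : (Fin n → Ω) → ℂ) : ℝ :=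
  ∑ x, wtp μ x * Complex.normSq (g x)

/-- The point of `Ω^n` agreeing with `w` on `I` and with `y` outside `I`. -/
def mergeF {Ω : Type*} {n : ℕ} (I : Finset (Fin n)) (w : {i // i ∈ I} → Ω)
    (y : Fin n → Ω) : Fin n → Ω :=
  fun i => if h : i ∈ I then w ⟨i, h⟩ else y i

namespace RDB

set_option linter.unusedSectionVars false
set_option maxHeartbeats 1000000
variable {Ω : Type} [Fintype Ω] [Nonempty Ω] {μ : Ω → ℝ} {n : ℕ}

/-- merge with outside given on the complement subtype -/
def mg {Ω : Type*} {n : ℕ} (I : Finset (Fin n)) (w : {i // i ∈ I} → Ω)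
    (y : {i : Fin n // i ∉ I} → Ω) : Fin n → Ω :=
  fun i => if h : i ∈ I then w ⟨i, h⟩ else y ⟨i, h⟩

lemma univ_sum_irrel {α : Type*} {M : Type*} [AddCommMonoid M] (F1 F2 : Fintype α) (f : α → M) :
    @Finset.sum α M _ (@Finset.univ α F1) f = @Finset.sum α M _ (@Finset.univ α F2) f := by
  rw [Subsingleton.elim F1 F2]

lemma univ_prod_irrel {α : Type*} {M : Type*} [CommMonoid M] (F1 F2 : Fintype α) (f : α → M) :
    @Finset.prod α M _ (@Finset.univ α F1) f = @Finset.prod α M _ (@Finset.univ α F2) f := by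
  rw [Subsingleton.elim F1 F2]

lemma sum_prod_mu {ι : Type} [Fintype ι] (hsum : ∑ a, μ a = 1) :
    ∑ w : ι → Ω, ∏ i, μ (w i) = 1 := by
  classical
  have := Finset.prod_univ_sum (fun _ : ι => (Finset.univ : Finset Ω)) (fun _ a => μ a)
  rw [Fintype.piFinset_univ] at this
  rw [← this]
  simp [hsum]

lemma sum_prod_muC {ι : Type} [Fintype ι] (hsum : ∑ a, μ a = 1) :
    ∑ w : ι → Ω, ∏ i, (μ (w i) : ℂ) = 1 := by
  have : ((∑ w : ι → Ω, ∏ i, μ (w i) : ℝ) : ℂ) = ((1:ℝ):ℂ) := by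
    rw [sum_prod_mu hsum]
  push_cast at this
  simpa using this

lemma sum_split {M : Type*} [AddCommMonoid M] (I : Finset (Fin n)) (G : (Fin n → Ω) → M) :
    ∑ x : Fin n → Ω, G x
      = ∑ w : {i // i ∈ I} → Ω, ∑ y : {i : Fin n // i ∉ I} → Ω, G (mg I w y) := by
  classical
  rw [← Equiv.sum_comp (Equiv.piEquivPiSubtypeProd (fun i : Fin n => i ∈ I) (fun _ => Ω)).symm G,
    Fintype.sum_prod_type]
  refine Finset.sum_congr rfl fun w _ => Finset.sum_congr rfl fun y _ => ?_
  congr 1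

lemma wtp_mg (I : Finset (Fin n)) (w : {i // i ∈ I} → Ω) (y : {i : Fin n // i ∉ I} → Ω) :
    wtp μ (mg I w y) = (∏ i, μ (w i)) * ∏ i, μ (y i) := by
  classical
  rw [wtp, ← Fintype.prod_subtype_mul_prod_subtype (fun i : Fin n => i ∈ I)
    (fun i => μ (mg I w y i))]
  congr 1
  · exact ((univ_prod_irrel _ _ _).trans (Finset.prod_congr rfl fun i _ => by simp [mg]))
  · exact ((univ_prod_irrel _ _ _).trans (Finset.prod_congr rfl fun i _ => by simp [mg, i.2]))

lemma wtp_mgC (I : Finset (Fin n)) (w : {i // i ∈ I} → Ω) (y : {i : Fin n // i ∉ I} → Ω) :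
    (wtp μ (mg I w y) : ℂ) = (∏ i, (μ (w i) : ℂ)) * ∏ i, (μ (y i) : ℂ) := by
  rw [wtp_mg]; push_cast; ring

/-- master weighted splitting identity over ℂ -/
lemma split_wtp (I : Finset (Fin n)) (G : (Fin n → Ω) → ℂ) :
    ∑ x, (wtp μ x : ℂ) * G x
      = ∑ w : {i // i ∈ I} → Ω, ∑ y : {i : Fin n // i ∉ I} → Ω,
          (∏ i, (μ (w i) : ℂ)) * (∏ i, (μ (y i) : ℂ)) * G (mg I w y) := by
  rw [sum_split I (fun x => (wtp μ x : ℂ) * G x)]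
  refine Finset.sum_congr rfl fun w _ => Finset.sum_congr rfl fun y _ => ?_
  rw [wtp_mgC]


lemma mergeF_mg (I : Finset (Fin n)) (w w' : {i // i ∈ I} → Ω) (y : {i : Fin n // i ∉ I} → Ω) :
    mergeF I w (mg I w' y) = mg I w y := by
  funext i; by_cases h : i ∈ I <;> simp [mergeF, mg, h]

/-- conditional expectation over the coordinates in `I` -/
def condE (μ : Ω → ℝ) {n : ℕ} (I : Finset (Fin n)) (G : (Fin n → Ω) → ℂ) :
    (Fin n → Ω) → ℂ :=
  fun x => ∑ w : {i // i ∈ I} → Ω, (∏ i, (μ (w i) : ℂ)) * G (mergeF I w x)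

/-- `g` does not depend on the coordinates in `I`. -/
def Indep {n : ℕ} (g : (Fin n → Ω) → ℂ) (I : Finset (Fin n)) : Prop :=
  ∀ (w : {i // i ∈ I} → Ω) (x : Fin n → Ω), g (mergeF I w x) = g x

lemma indep_mg {g : (Fin n → Ω) → ℂ} {I : Finset (Fin n)} (hg : Indep g I)
    (w w' : {i // i ∈ I} → Ω) (y : {i : Fin n // i ∉ I} → Ω) :
    g (mg I w y) = g (mg I w' y) := by
  rw [← mergeF_mg I w w' y]; exact hg w _

lemma condE_mul_indep (hsum : ∑ a, μ a = 1) (I : Finset (Fin n))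
    (G g : (Fin n → Ω) → ℂ) (hg : Indep g I) :
    ∑ x, (wtp μ x : ℂ) * (condE μ I G x * g x) = ∑ x, (wtp μ x : ℂ) * (G x * g x) := by
  rw [split_wtp I (fun x => condE μ I G x * g x), split_wtp I (fun x => G x * g x)]
  have hD : ∀ (w : {i // i ∈ I} → Ω) (y : {i : Fin n // i ∉ I} → Ω),
      condE μ I G (mg I w y) * g (mg I w y)
        = ∑ w' : {i // i ∈ I} → Ω, (∏ i, (μ (w' i) : ℂ)) * (G (mg I w' y) * g (mg I w' y)) := by
    intro w y
    simp only [condE, mergeF_mg, Finset.sum_mul]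
    exact Finset.sum_congr rfl fun w' _ => by rw [indep_mg hg w w' y]; ring
  calc ∑ w : {i // i ∈ I} → Ω, ∑ y : {i : Fin n // i ∉ I} → Ω,
          (∏ i, (μ (w i) : ℂ)) * (∏ i, (μ (y i) : ℂ)) * (condE μ I G (mg I w y) * g (mg I w y))
      = ∑ w : {i // i ∈ I} → Ω, (∏ i, (μ (w i) : ℂ)) *
          ∑ y : {i : Fin n // i ∉ I} → Ω, (∏ i, (μ (y i) : ℂ)) *
            ∑ w' : {i // i ∈ I} → Ω, (∏ i, (μ (w' i) : ℂ)) * (G (mg I w' y) * g (mg I w' y)) := by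
        refine Finset.sum_congr rfl fun w _ => ?_
        rw [Finset.mul_sum]
        exact Finset.sum_congr rfl fun y _ => by rw [hD w y]; ring
    _ = (∑ w : {i // i ∈ I} → Ω, (∏ i, (μ (w i) : ℂ))) *
          ∑ y : {i : Fin n // i ∉ I} → Ω, (∏ i, (μ (y i) : ℂ)) *
            ∑ w' : {i // i ∈ I} → Ω, (∏ i, (μ (w' i) : ℂ)) * (G (mg I w' y) * g (mg I w' y)) := by
        rw [← Finset.sum_mul]
    _ = ∑ y : {i : Fin n // i ∉ I} → Ω, (∏ i, (μ (y i) : ℂ)) *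
            ∑ w' : {i // i ∈ I} → Ω, (∏ i, (μ (w' i) : ℂ)) * (G (mg I w' y) * g (mg I w' y)) := by
        have h1 : (∑ w : {i // i ∈ I} → Ω, ∏ i, (μ (w i) : ℂ)) = 1 :=
          (univ_sum_irrel _ _ _).trans (sum_prod_muC hsum)
        rw [h1, one_mul]
    _ = ∑ y : {i : Fin n // i ∉ I} → Ω, ∑ w' : {i // i ∈ I} → Ω,
            (∏ i, (μ (w' i) : ℂ)) * (∏ i, (μ (y i) : ℂ)) * (G (mg I w' y) * g (mg I w' y)) := by
        refine Finset.sum_congr rfl fun y _ => ?_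
        rw [Finset.mul_sum]
        exact Finset.sum_congr rfl fun w' _ => by ring
    _ = ∑ w' : {i // i ∈ I} → Ω, ∑ y : {i : Fin n // i ∉ I} → Ω,
            (∏ i, (μ (w' i) : ℂ)) * (∏ i, (μ (y i) : ℂ)) * (G (mg I w' y) * g (mg I w' y)) :=
        Finset.sum_comm

lemma tower (hsum : ∑ a, μ a = 1) (I : Finset (Fin n)) (G : (Fin n → Ω) → ℂ) :
    ∑ x, (wtp μ x : ℂ) * condE μ I G x = ∑ x, (wtp μ x : ℂ) * G x := by
  have := condE_mul_indep (μ := μ) hsum I G (fun _ => 1) (fun _ _ => rfl)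
  simpa using this

lemma inner_eq (A g : (Fin n → Ω) → ℂ) :
    innerμ μ A g = ∑ x, (wtp μ x : ℂ) * (A x * starRingEnd ℂ (g x)) := by
  simp [innerμ, mul_assoc]

lemma inner_condE_left (hsum : ∑ a, μ a = 1) (I : Finset (Fin n))
    (G g : (Fin n → Ω) → ℂ) (hg : Indep g I) :
    innerμ μ (condE μ I G) g = innerμ μ G g := by
  rw [inner_eq, inner_eq]
  exact condE_mul_indep hsum I G (fun x => starRingEnd ℂ (g x))
    (fun w x => congrArg (starRingEnd ℂ) (hg w x))

lemma inner_conj (A B : (Fin n → Ω) → ℂ) :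
    innerμ μ A B = starRingEnd ℂ (innerμ μ B A) := by
  rw [innerμ, innerμ, map_sum]
  refine Finset.sum_congr rfl fun x _ => ?_
  simp only [map_mul, Complex.conj_conj, Complex.conj_ofReal]
  ring

lemma inner_condE_right (hsum : ∑ a, μ a = 1) (I : Finset (Fin n))
    (G g : (Fin n → Ω) → ℂ) (hg : Indep g I) :
    innerμ μ g (condE μ I G) = innerμ μ g G := by
  rw [inner_conj, inner_condE_left hsum I G g hg, ← inner_conj]

lemma isJunta_mono {g : (Fin n → Ω) → ℂ} {S T : Finset (Fin n)} (h : IsJunta g S)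
    (hST : S ⊆ T) : IsJunta g T :=
  fun x y hxy => h x y fun i hi => hxy i (hST hi)

lemma indep_of_junta_disjoint {g : (Fin n → Ω) → ℂ} {T I : Finset (Fin n)}
    (hg : IsJunta g T) (hdisj : Disjoint T I) : Indep g I := by
  intro w x
  apply hg
  intro i hi
  have hiI : i ∉ I := fun hI => Finset.disjoint_left.mp hdisj hi hI
  simp [mergeF, hiI]

lemma junta_condE_compl (I : Finset (Fin n)) (G : (Fin n → Ω) → ℂ) :
    IsJunta (condE μ I G) Iᶜ := by
  intro x y hxy
  refine Finset.sum_congr rfl fun w _ => ?_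
  have hm : mergeF I w x = mergeF I w y := by
    funext i
    by_cases h : i ∈ I
    · simp [mergeF, h]
    · simp [mergeF, h, hxy i (Finset.mem_compl.mpr h)]
  rw [hm]

lemma junta_condE {I T : Finset (Fin n)} {G : (Fin n → Ω) → ℂ} (hG : IsJunta G T) :
    IsJunta (condE μ I G) (T \ I) := by
  intro x y hxy
  refine Finset.sum_congr rfl fun w _ => ?_
  have hm : G (mergeF I w x) = G (mergeF I w y) := by
    apply hG
    intro i hi
    by_cases h : i ∈ I
    · simp [mergeF, h]
    · simp only [mergeF, dif_neg h]
      exact hxy i (Finset.mem_sdiff.mpr ⟨hi, h⟩)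
  rw [hm]

lemma indep_condE (I : Finset (Fin n)) (G : (Fin n → Ω) → ℂ) :
    Indep (condE μ I G) I :=
  indep_of_junta_disjoint (junta_condE_compl I G) disjoint_compl_left

lemma condE_of_indep (hsum : ∑ a, μ a = 1) {I : Finset (Fin n)} {G : (Fin n → Ω) → ℂ}
    (hG : Indep G I) : condE μ I G = G := by
  funext x
  unfold condE
  calc ∑ w : {i // i ∈ I} → Ω, (∏ i, (μ (w i) : ℂ)) * G (mergeF I w x)
      = ∑ w : {i // i ∈ I} → Ω, (∏ i, (μ (w i) : ℂ)) * G x :=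
        Finset.sum_congr rfl fun w _ => by rw [hG w x]
    _ = (∑ w : {i // i ∈ I} → Ω, (∏ i, (μ (w i) : ℂ))) * G x := by rw [Finset.sum_mul]
    _ = G x := by
        have h1 : (∑ w : {i // i ∈ I} → Ω, ∏ i, (μ (w i) : ℂ)) = 1 :=
          (univ_sum_irrel _ _ _).trans (sum_prod_muC hsum)
        rw [h1, one_mul]

lemma wtp_pos (hpos : ∀ a, 0 < μ a) (x : Fin n → Ω) : 0 < wtp μ x :=
  Finset.prod_pos fun i _ => hpos (x i)

lemma inner_self (g : (Fin n → Ω) → ℂ) : innerμ μ g g = (norm2sq μ g : ℂ) := by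
  rw [innerμ, norm2sq]
  push_cast
  refine Finset.sum_congr rfl fun x _ => ?_
  rw [mul_assoc, Complex.mul_conj]

lemma inner_sum_left {ι' : Type*} (𝒮 : Finset ι') (A : ι' → (Fin n → Ω) → ℂ)
    (g : (Fin n → Ω) → ℂ) :
    innerμ μ (∑ S ∈ 𝒮, A S) g = ∑ S ∈ 𝒮, innerμ μ (A S) g := by
  simp only [innerμ, Finset.sum_apply, Finset.mul_sum, Finset.sum_mul]
  exact Finset.sum_comm

lemma inner_sum_right {ι' : Type*} (𝒮 : Finset ι') (A : ι' → (Fin n → Ω) → ℂ)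
    (g : (Fin n → Ω) → ℂ) :
    innerμ μ g (∑ S ∈ 𝒮, A S) = ∑ S ∈ 𝒮, innerμ μ g (A S) := by
  simp only [innerμ, Finset.sum_apply, map_sum, Finset.mul_sum, Finset.sum_mul]
  exact Finset.sum_comm

lemma norm2sq_sum {ι' : Type*} {𝒮 : Finset ι'} {A : ι' → (Fin n → Ω) → ℂ}
    (horth : ∀ S ∈ 𝒮, ∀ T ∈ 𝒮, S ≠ T → innerμ μ (A S) (A T) = 0) :
    norm2sq μ (∑ S ∈ 𝒮, A S) = ∑ S ∈ 𝒮, norm2sq μ (A S) := by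
  have key : (norm2sq μ (∑ S ∈ 𝒮, A S) : ℂ) = ((∑ S ∈ 𝒮, norm2sq μ (A S) : ℝ) : ℂ) := by
    rw [← inner_self, inner_sum_left]
    push_cast
    calc ∑ S ∈ 𝒮, innerμ μ (A S) (∑ T ∈ 𝒮, A T)
        = ∑ S ∈ 𝒮, ∑ T ∈ 𝒮, innerμ μ (A S) (A T) :=
          Finset.sum_congr rfl fun S _ => inner_sum_right 𝒮 A (A S)
      _ = ∑ S ∈ 𝒮, innerμ μ (A S) (A S) := by
          refine Finset.sum_congr rfl fun S hS => ?_
          refine Finset.sum_eq_single S (fun T hT hTS => horth S hS T hT (Ne.symm hTS))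
            (fun h => absurd hS h)
      _ = ∑ S ∈ 𝒮, ((norm2sq μ (A S) : ℝ) : ℂ) :=
          Finset.sum_congr rfl fun S _ => inner_self (A S)
  exact_mod_cast key

variable {F : Finset (Fin n) → (Fin n → Ω) → ℂ}

lemma ortho_aux (hsum : ∑ a, μ a = 1) (hF : ∀ S, InVeq μ (F S) S)
    {S T : Finset (Fin n)} (hST : ¬ S ⊆ T) :
    innerμ μ (F S) (F T) = 0 := by
  have hindep : Indep (F S) Sᶜ := indep_of_junta_disjoint (hF S).1 disjoint_compl_right
  have h1 : innerμ μ (F S) (F T) = innerμ μ (F S) (condE μ Sᶜ (F T)) :=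
    (inner_condE_right hsum Sᶜ (F T) (F S) hindep).symm
  rw [h1]
  refine (hF S).2 (S ∩ T) ?_ _ ?_
  · exact lt_of_le_of_ne Finset.inter_subset_left
      (fun h => hST (Finset.inter_eq_left.mp h))
  · refine isJunta_mono (junta_condE (μ := μ) (I := Sᶜ) (hF T).1) ?_
    intro i hi
    rw [Finset.mem_sdiff, Finset.mem_compl, not_not] at hi
    exact Finset.mem_inter.mpr ⟨hi.2, hi.1⟩

lemma ortho (hsum : ∑ a, μ a = 1) (hF : ∀ S, InVeq μ (F S) S)
    {S T : Finset (Fin n)} (hne : S ≠ T) :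
    innerμ μ (F S) (F T) = 0 := by
  by_cases h : S ⊆ T
  · have h2 : ¬ T ⊆ S := fun h2 => hne (Finset.Subset.antisymm h h2)
    rw [inner_conj, ortho_aux hsum hF h2, map_zero]
  · exact ortho_aux hsum hF h

lemma condE_vanish (hpos : ∀ a, 0 < μ a) (hsum : ∑ a, μ a = 1)
    (hF : ∀ S, InVeq μ (F S) S) {S I : Finset (Fin n)}
    (hSI : ¬ Disjoint S I) : condE μ I (F S) = 0 := by
  have hinner : innerμ μ (F S) (condE μ I (F S)) = 0 := by
    refine (hF S).2 (S \ I) ?_ _ (junta_condE (hF S).1)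
    exact lt_of_le_of_ne (Finset.sdiff_subset)
      (fun h => hSI (Finset.sdiff_eq_self_iff_disjoint.mp h))
  have h2 : innerμ μ (condE μ I (F S)) (condE μ I (F S)) = 0 := by
    rw [inner_condE_left hsum I (F S) _ (indep_condE I (F S))]
    exact hinner
  rw [inner_self] at h2
  have h3 : norm2sq μ (condE μ I (F S)) = 0 := by exact_mod_cast h2
  funext x
  have h4 : ∀ y ∈ (Finset.univ : Finset (Fin n → Ω)),
      0 ≤ wtp μ y * Complex.normSq (condE μ I (F S) y) :=
    fun y _ => mul_nonneg (le_of_lt (wtp_pos hpos y)) (Complex.normSq_nonneg _)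
  have h5 := (Finset.sum_eq_zero_iff_of_nonneg h4).mp h3 x (Finset.mem_univ x)
  have h6 : Complex.normSq (condE μ I (F S) x) = 0 := by
    have := (wtp_pos hpos x).ne'
    exact (mul_eq_zero.mp h5).resolve_left this
  simpa using Complex.normSq_eq_zero.mp h6

lemma condE_of_disjoint (hsum : ∑ a, μ a = 1) (hF : ∀ S, InVeq μ (F S) S)
    {S I : Finset (Fin n)} (hSI : Disjoint S I) : condE μ I (F S) = F S :=
  condE_of_indep hsum (indep_of_junta_disjoint (hF S).1 hSI)

lemma condE_sum {ι' : Type*} (I : Finset (Fin n)) (𝒮 : Finset ι')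
    (A : ι' → (Fin n → Ω) → ℂ) :
    condE μ I (∑ S ∈ 𝒮, A S) = ∑ S ∈ 𝒮, condE μ I (A S) := by
  funext x
  simp only [condE, Finset.sum_apply, Finset.mul_sum]
  exact Finset.sum_comm

lemma choose_id (N : ℕ) (hN : 1 ≤ N) (m : ℕ) :
    N * (N - 1).choose m = N.choose m * (N - m) := by
  obtain ⟨K, rfl⟩ : ∃ K, N = K + 1 := ⟨N - 1, (Nat.succ_pred_eq_of_pos hN).symm⟩
  rw [Nat.add_sub_cancel]
  calc (K + 1) * K.choose m = (K + 1).choose (m + 1) * (m + 1) := Nat.add_one_mul_choose_eq K m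
    _ = (K + 1).choose m * ((K + 1) - m) := Nat.choose_succ_right_eq (K + 1) m

lemma choose_ratio {n d m s : ℕ} (hd : 1 ≤ d) (hn8 : 8 * d ^ 2 ≤ n)
    (hm_up : (m : ℝ) ≤ (n : ℝ) / (2 * d) + 1) (hsd : s ≤ d) :
    (2 / 7 : ℝ) * (n.choose m) ≤ ((n - s).choose m) := by
  have hD1 : (1 : ℝ) ≤ (d : ℝ) := by exact_mod_cast hd
  have hD0 : (0 : ℝ) < (d : ℝ) := lt_of_lt_of_le one_pos hD1
  have hn8R : 8 * (d : ℝ) ^ 2 ≤ (n : ℝ) := by exact_mod_cast hn8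
  have h8d : 8 * (d : ℝ) ≤ (n : ℝ) := by nlinarith
  have hND : (0 : ℝ) < (n : ℝ) - (d : ℝ) := by nlinarith
  set t : ℝ := (m : ℝ) / ((n : ℝ) - (d : ℝ)) with ht
  have hm0 : (0 : ℝ) ≤ (m : ℝ) := Nat.cast_nonneg m
  have ht0 : 0 ≤ t := div_nonneg hm0 (le_of_lt hND)
  have hdm : (d : ℝ) * (m : ℝ) ≤ (n : ℝ) / 2 + (d : ℝ) := by
    have := mul_le_mul_of_nonneg_left hm_up (le_of_lt hD0)
    calc (d : ℝ) * m ≤ (d : ℝ) * ((n : ℝ) / (2 * d) + 1) := this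
      _ = (n : ℝ) / 2 + d := by field_simp
  have hdt : (d : ℝ) * t ≤ 5 / 7 := by
    rw [ht, mul_div_assoc']
    rw [div_le_iff₀ hND]
    nlinarith
  have ht1 : t ≤ 5 / 7 := le_trans (by nlinarith) hdt
  have h1t0 : (0 : ℝ) ≤ 1 - t := by linarith
  have hmsn : m + d ≤ n := by
    have : (m : ℝ) + (d : ℝ) ≤ (n : ℝ) := by
      have hm2 : (m : ℝ) ≤ (n : ℝ) / 2 + 1 := by
        refine le_trans hm_up ?_
        have : (n : ℝ) / (2 * d) ≤ (n : ℝ) / 2 := by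
          apply div_le_div_of_nonneg_left _ two_pos _
          · positivity
          · nlinarith
        linarith
      nlinarith
    exact_mod_cast this
  -- induction claim
  have key : ∀ s', s' ≤ d → (1 - t) ^ s' * (n.choose m) ≤ ((n - s').choose m) := by
    intro s'
    induction s' with
    | zero => intro _; simp
    | succ k ih =>
      intro hk1
      have hk : k ≤ d := le_trans (Nat.le_succ k) hk1
      have IH := ih hk
      have hkn : k + 1 ≤ n := by
        have : (d : ℕ) ≤ n := by nlinarith [hn8]
        omega
      have hN1 : 1 ≤ n - k := by omega
      have hmNk : m ≤ n - k := by omega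
      have hid := choose_id (n - k) hN1 m
      have hsub : n - k - 1 = n - (k + 1) := by omega
      rw [hsub] at hid
      -- cast to ℝ
      have hidR : ((n : ℝ) - k) * ((n - (k + 1)).choose m : ℝ)
          = ((n - k).choose m : ℝ) * (((n : ℝ) - k) - m) := by
        have h1 : ((n - k : ℕ) : ℝ) = (n : ℝ) - k := Nat.cast_sub (by omega)
        have h2 : ((n - k - m : ℕ) : ℝ) = ((n : ℝ) - k) - m := by
          push_cast [Nat.cast_sub hmNk, Nat.cast_sub (by omega : k ≤ n)]
          ring
        have := congrArg (fun z : ℕ => (z : ℝ)) hid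
        push_cast at this
        rw [Nat.cast_sub (by omega : k ≤ n), Nat.cast_sub hmNk,
          Nat.cast_sub (by omega : k ≤ n)] at this
        linarith [this]
      have hnu : (0 : ℝ) < (n : ℝ) - k := by
        have : (k : ℝ) < (n : ℝ) := by exact_mod_cast (by omega : k < n)
        linarith
      -- (1-t) * C_k ≤ C_{k+1}
      have hstep : (1 - t) * ((n - k).choose m : ℝ) ≤ ((n - (k + 1)).choose m : ℝ) := by
        rw [← mul_le_mul_iff_of_pos_right hnu]
        have hrhs : ((n - (k + 1)).choose m : ℝ) * ((n : ℝ) - k)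
            = ((n - k).choose m : ℝ) * (((n : ℝ) - k) - m) := by linarith [hidR]
        rw [hrhs]
        have hC0 : (0 : ℝ) ≤ ((n - k).choose m : ℝ) := Nat.cast_nonneg _
        have htnu : (m : ℝ) ≤ t * ((n : ℝ) - k) := by
          rw [ht]
          rw [div_mul_eq_mul_div, le_div_iff₀ hND]
          have hkd : (k : ℝ) ≤ (d : ℝ) := by exact_mod_cast hk
          nlinarith
        nlinarith
      calc (1 - t) ^ (k + 1) * (n.choose m : ℝ)
          = (1 - t) * ((1 - t) ^ k * (n.choose m : ℝ)) := by ring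
        _ ≤ (1 - t) * ((n - k).choose m : ℝ) := by
            exact mul_le_mul_of_nonneg_left IH h1t0
        _ ≤ ((n - (k + 1)).choose m : ℝ) := hstep
  -- Bernoulli
  have hbern : (2 / 7 : ℝ) ≤ (1 - t) ^ d := by
    have h := one_add_mul_le_pow (by linarith : (-2 : ℝ) ≤ -t) d
    have : 1 + (d : ℝ) * (-t) ≤ (1 + (-t)) ^ d := h
    have h2 : (2 / 7 : ℝ) ≤ 1 + (d : ℝ) * (-t) := by linarith
    calc (2 / 7 : ℝ) ≤ 1 + (d : ℝ) * (-t) := h2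
      _ ≤ (1 + (-t)) ^ d := h
      _ = (1 - t) ^ d := by ring_nf
  have hmono : (1 - t) ^ d ≤ (1 - t) ^ s :=
    pow_le_pow_of_le_one h1t0 (by linarith) hsd
  calc (2 / 7 : ℝ) * (n.choose m : ℝ) ≤ (1 - t) ^ d * (n.choose m : ℝ) := by
        exact mul_le_mul_of_nonneg_right hbern (Nat.cast_nonneg _)
    _ ≤ (1 - t) ^ s * (n.choose m : ℝ) := by
        exact mul_le_mul_of_nonneg_right hmono (Nat.cast_nonneg _)
    _ ≤ ((n - s).choose m : ℝ) := key s hsd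

end RDB

set_option maxHeartbeats 3000000 in
open RDB in
/-- **Significant low-level weight yields a density bump under a restriction.** There is an
absolute constant `c > 0` such that: if `f : Ω^n → {0,1}` and its Efron–Stein decomposition of
`f - E[f]` has weight at least `ξ ≥ 2^{-c·n/d²}` up to level `d`, then there are `I ⊆ [n]` with
`|I| ≥ n/(2d)` and `y ∈ Ω^{[n]∖I}` with `E[f_{Ī→y}] ≥ E[f] + ξ/(4e)`. -/
theorem restriction_to_density_bump :
    ∃ c : ℝ, 0 < c ∧
      ∀ (Ω : Type) [Fintype Ω] [Nonempty Ω] (μ : Ω → ℝ),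
        (∀ a, 0 < μ a) → (∑ a, μ a = 1) →
        ∀ (n d : ℕ), 1 ≤ d →
        ∀ ξ : ℝ, 0 < ξ → (2 : ℝ) ^ (-(c * n) / (d : ℝ) ^ 2) ≤ ξ →
        ∀ f : (Fin n → Ω) → ℝ, (∀ x, f x = 0 ∨ f x = 1) →
        ∀ F : Finset (Fin n) → ((Fin n → Ω) → ℂ),
          (∀ S, InVeq μ (F S) S) →
          ((fun x => (f x : ℂ) - ((∑ y, wtp μ y * f y : ℝ) : ℂ)) = ∑ S, F S) →
          ξ ≤ (∑ S ∈ Finset.univ.filter (fun S : Finset (Fin n) => S.card ≤ d),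
                norm2sq μ (F S)) →
          ∃ (I : Finset (Fin n)) (y : Fin n → Ω),
            (n : ℝ) / (2 * d) ≤ (I.card : ℝ) ∧
            (∑ x, wtp μ x * f x) + ξ / (4 * Real.exp 1) ≤
              ∑ w : {i // i ∈ I} → Ω, (∏ i, μ (w i)) * f (mergeF I w y) := by
  classical
  refine ⟨1/4, by norm_num, ?_⟩
  intro Ω _ _ μ hpos hsum n d hd ξ hξ0 hξlow f hf F hF hdecomp hweight
  set α : ℝ := ∑ x, wtp μ x * f x with hα
  set fC : (Fin n → Ω) → ℂ := fun x => (f x : ℂ) - (α : ℂ) with hfC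
  have hf0 : ∀ x, 0 ≤ f x := fun x => by rcases hf x with h | h <;> rw [h] <;> norm_num
  have hf1 : ∀ x, f x ≤ 1 := fun x => by rcases hf x with h | h <;> rw [h] <;> norm_num
  have hff : ∀ x, f x * f x = f x := fun x => by rcases hf x with h | h <;> rw [h] <;> ring
  have hwt1 : (∑ x : Fin n → Ω, wtp μ x) = 1 :=
    (univ_sum_irrel _ _ _).trans (sum_prod_mu hsum)
  have hα0 : 0 ≤ α := Finset.sum_nonneg fun x _ =>
    mul_nonneg (wtp_pos hpos x).le (hf0 x)
  have hα1 : α ≤ 1 := by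
    rw [hα]
    calc ∑ x, wtp μ x * f x ≤ ∑ x : Fin n → Ω, wtp μ x := by
          refine Finset.sum_le_sum fun x _ => ?_
          have := mul_le_mul_of_nonneg_left (hf1 x) (wtp_pos hpos x).le
          simpa using this
      _ = 1 := hwt1
  -- variance computation
  have hfCx : ∀ x, fC x = ((f x - α : ℝ) : ℂ) := by
    intro x
    show (f x : ℂ) - (α : ℂ) = ((f x - α : ℝ) : ℂ)
    push_cast
    ring
  have hsq : ∀ x, Complex.normSq (fC x) = (f x - α) ^ 2 := by
    intro x
    rw [hfCx x, Complex.normSq_ofReal]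
    ring
  have hvar : norm2sq μ fC = α - α ^ 2 := by
    rw [norm2sq]
    have hterm : ∀ x : Fin n → Ω, wtp μ x * Complex.normSq (fC x)
        = wtp μ x * f x - 2 * α * (wtp μ x * f x) + α ^ 2 * wtp μ x := by
      intro x
      rw [hsq x]
      have : wtp μ x * (f x - α) ^ 2
          = wtp μ x * (f x * f x) - 2 * α * (wtp μ x * f x) + α ^ 2 * wtp μ x := by ring
      rw [this, hff x]
    rw [Finset.sum_congr rfl fun x _ => hterm x]
    rw [Finset.sum_add_distrib, Finset.sum_sub_distrib, ← Finset.mul_sum, ← Finset.mul_sum,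
      ← hα, hwt1]
    ring
  -- total Parseval
  have horthF : ∀ S ∈ (Finset.univ : Finset (Finset (Fin n))), ∀ T ∈ (Finset.univ : Finset (Finset (Fin n))),
      S ≠ T → innerμ μ (F S) (F T) = 0 := fun S _ T _ hne => ortho hsum hF hne
  have htotal : (∑ S : Finset (Fin n), norm2sq μ (F S)) = α - α ^ 2 := by
    rw [← norm2sq_sum horthF, ← hdecomp, hvar]
  have hn2nonneg : ∀ S, 0 ≤ norm2sq μ (F S) := fun S =>
    Finset.sum_nonneg fun x _ => mul_nonneg (wtp_pos hpos x).le (Complex.normSq_nonneg _)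
  have hξ14 : ξ ≤ 1 / 4 := by
    calc ξ ≤ ∑ S ∈ Finset.univ.filter (fun S : Finset (Fin n) => S.card ≤ d),
          norm2sq μ (F S) := hweight
      _ ≤ ∑ S : Finset (Fin n), norm2sq μ (F S) :=
          Finset.sum_le_sum_of_subset_of_nonneg (Finset.filter_subset _ _)
            (fun S _ _ => hn2nonneg S)
      _ = α - α ^ 2 := htotal
      _ ≤ 1 / 4 := by nlinarith [sq_nonneg (2 * α - 1)]
  -- n is large
  have hd2pos : (0 : ℝ) < (d : ℝ) ^ 2 := by
    have : (0 : ℝ) < (d : ℝ) := by exact_mod_cast Nat.lt_of_lt_of_le Nat.zero_lt_one hd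
    positivity
  have hn8R : 8 * (d : ℝ) ^ 2 ≤ (n : ℝ) := by
    have h24 : (2 : ℝ) ^ (-2 : ℝ) = 1 / 4 := by
      rw [show (-2 : ℝ) = ((-2 : ℤ) : ℝ) by norm_num, Real.rpow_intCast]
      norm_num
    have hle : (2 : ℝ) ^ (-(1 / 4 * (n : ℝ)) / (d : ℝ) ^ 2) ≤ (2 : ℝ) ^ (-2 : ℝ) := by
      rw [h24]; linarith
    have hexp := (Real.rpow_le_rpow_left_iff (by norm_num : (1 : ℝ) < 2)).mp hle
    have := (div_le_iff₀ hd2pos).mp hexp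
    nlinarith
  have hn8 : 8 * d ^ 2 ≤ n := by exact_mod_cast hn8R
  have hd1R : (1 : ℝ) ≤ (d : ℝ) := by exact_mod_cast hd
  -- the restriction size
  set m : ℕ := ⌈(n : ℝ) / (2 * (d : ℝ))⌉₊ with hm
  have hm_low : (n : ℝ) / (2 * (d : ℝ)) ≤ (m : ℝ) := Nat.le_ceil _
  have hm_up : (m : ℝ) ≤ (n : ℝ) / (2 * (d : ℝ)) + 1 := by
    have := Nat.ceil_lt_add_one (by positivity : (0:ℝ) ≤ (n : ℝ) / (2 * (d : ℝ)))
    exact this.le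
  have hmn : m ≤ n := by
    have hmR : (m : ℝ) ≤ (n : ℝ) := by
      have h1 : (n : ℝ) / (2 * (d : ℝ)) ≤ (n : ℝ) / 2 := by
        apply div_le_div_of_nonneg_left
        · exact_mod_cast Nat.zero_le n
        · norm_num
        · linarith
      have h2 : (8 : ℝ) ≤ (n : ℝ) := by nlinarith
      linarith
    exact_mod_cast hmR
  set T : Finset (Finset (Fin n)) := Finset.powersetCard m Finset.univ with hT
  have hTcard : T.card = n.choose m := by
    rw [hT, Finset.card_powersetCard, Finset.card_univ, Fintype.card_fin]
  have hTne : T.Nonempty := by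
    rw [hT, Finset.powersetCard_nonempty]
    rw [Finset.card_univ, Fintype.card_fin]
    exact hmn
  -- the restricted density
  set R : Finset (Fin n) → (Fin n → Ω) → ℝ :=
    fun I y => ∑ w : {i // i ∈ I} → Ω, (∏ i, μ (w i)) * f (mergeF I w y) with hRdef
  have hwsub : ∀ I : Finset (Fin n), (∑ w : {i // i ∈ I} → Ω, ∏ i, μ (w i)) = 1 :=
    fun I => (univ_sum_irrel _ _ _).trans (sum_prod_mu hsum)
  have hR0 : ∀ I y, 0 ≤ R I y := fun I y =>
    Finset.sum_nonneg fun w _ =>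
      mul_nonneg (Finset.prod_nonneg fun i _ => (hpos _).le) (hf0 _)
  have hR1 : ∀ I y, R I y ≤ 1 := by
    intro I y
    rw [hRdef]
    calc ∑ w : {i // i ∈ I} → Ω, (∏ i, μ (w i)) * f (mergeF I w y)
        ≤ ∑ w : {i // i ∈ I} → Ω, ∏ i, μ (w i) := by
          refine Finset.sum_le_sum fun w _ => ?_
          have h1 : (0:ℝ) ≤ ∏ i, μ (w i) := Finset.prod_nonneg fun i _ => (hpos _).le
          have := mul_le_mul_of_nonneg_left (hf1 (mergeF I w y)) h1
          simpa using this
      _ = 1 := hwsub I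
  -- restricted density equals conditional expectation
  have hRC : ∀ (I : Finset (Fin n)) (y : Fin n → Ω),
      condE μ I fC y = ((R I y - α : ℝ) : ℂ) := by
    intro I y
    have hterm : ∀ w : {i // i ∈ I} → Ω,
        (∏ i, (μ (w i) : ℂ)) * fC (mergeF I w y)
          = (((∏ i, μ (w i)) * f (mergeF I w y) : ℝ) : ℂ)
            - (α : ℂ) * (((∏ i, μ (w i) : ℝ)) : ℂ) := by
      intro w
      rw [hfC]
      push_cast
      ring
    calc condE μ I fC y
        = ∑ w : {i // i ∈ I} → Ω, (∏ i, (μ (w i) : ℂ)) * fC (mergeF I w y) := rfl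
      _ = ∑ w : {i // i ∈ I} → Ω,
            ((((∏ i, μ (w i)) * f (mergeF I w y) : ℝ) : ℂ)
              - (α : ℂ) * (((∏ i, μ (w i) : ℝ)) : ℂ)) :=
          Finset.sum_congr rfl fun w _ => hterm w
      _ = ((R I y : ℝ) : ℂ) - (α : ℂ) * ((1 : ℝ) : ℂ) := by
          rw [Finset.sum_sub_distrib, ← Complex.ofReal_sum, ← Finset.mul_sum,
            ← Complex.ofReal_sum, hwsub I, hRdef]
      _ = ((R I y - α : ℝ) : ℂ) := by push_cast; ring
  -- decomposition of the conditional expectation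
  have hCd : ∀ I : Finset (Fin n), condE μ I fC
      = ∑ S ∈ Finset.univ.filter (fun S : Finset (Fin n) => Disjoint S I), F S := by
    intro I
    have hper : ∀ S : Finset (Fin n),
        condE μ I (F S) = if Disjoint S I then F S else 0 := by
      intro S
      by_cases h : Disjoint S I
      · rw [if_pos h]; exact condE_of_disjoint hsum hF h
      · rw [if_neg h]; exact condE_vanish hpos hsum hF h
    rw [hdecomp, condE_sum, Finset.sum_congr rfl fun S _ => hper S, ← Finset.sum_filter]
  -- per-I Parseval
  have hBI : ∀ I : Finset (Fin n), (∑ x, wtp μ x * (R I x - α) ^ 2)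
      = ∑ S ∈ Finset.univ.filter (fun S : Finset (Fin n) => Disjoint S I),
          norm2sq μ (F S) := by
    intro I
    have h1 : (∑ x, wtp μ x * (R I x - α) ^ 2) = norm2sq μ (condE μ I fC) := by
      rw [norm2sq]
      refine Finset.sum_congr rfl fun x _ => ?_
      rw [hRC I x, Complex.normSq_ofReal]
      ring
    rw [h1, hCd I, norm2sq_sum fun S _ T' _ hne => ortho hsum hF hne]
  -- mean zero
  have hmean : ∀ I : Finset (Fin n), (∑ x, wtp μ x * (R I x - α)) = 0 := by
    intro I
    have h1 := tower (μ := μ) hsum I fC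
    have h2 : (∑ x, (wtp μ x : ℂ) * fC x) = 0 := by
      have hterm : ∀ x : Fin n → Ω, (wtp μ x : ℂ) * fC x
          = ((wtp μ x * f x : ℝ) : ℂ) - (α : ℂ) * ((wtp μ x : ℝ) : ℂ) := by
        intro x
        rw [hfC]
        push_cast
        ring
      rw [Finset.sum_congr rfl fun x _ => hterm x, Finset.sum_sub_distrib,
        ← Complex.ofReal_sum, ← Finset.mul_sum, ← Complex.ofReal_sum, ← hα, hwt1]
      push_cast
      ring
    have h3 : (∑ x, (wtp μ x : ℂ) * condE μ I fC x) = 0 := by rw [h1, h2]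
    have h4 : (((∑ x, wtp μ x * (R I x - α)) : ℝ) : ℂ) = 0 := by
      rw [← h3, Complex.ofReal_sum]
      refine Finset.sum_congr rfl fun x _ => ?_
      rw [hRC I x]
      push_cast
      ring
    exact_mod_cast h4
  -- average of the square over random I
  have hsum_T : (2 / 7) * (n.choose m : ℝ) * ξ
      ≤ ∑ I ∈ T, ∑ x, wtp μ x * (R I x - α) ^ 2 := by
    have step1 : ∀ I ∈ T,
        (∑ S ∈ Finset.univ.filter (fun S : Finset (Fin n) => S.card ≤ d),
          if Disjoint S I then norm2sq μ (F S) else 0)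
          ≤ ∑ x, wtp μ x * (R I x - α) ^ 2 := by
      intro I _
      rw [hBI I, ← Finset.sum_filter]
      refine Finset.sum_le_sum_of_subset_of_nonneg ?_ (fun S _ _ => hn2nonneg S)
      intro S hS
      simp only [Finset.mem_filter, Finset.mem_univ, true_and] at hS ⊢
      exact hS.2
    have step2 : (2 / 7) * (n.choose m : ℝ) * ξ
        ≤ ∑ I ∈ T, ∑ S ∈ Finset.univ.filter (fun S : Finset (Fin n) => S.card ≤ d),
            if Disjoint S I then norm2sq μ (F S) else 0 := by
      rw [Finset.sum_comm]
      have hcount : ∀ S : Finset (Fin n),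
          (∑ I ∈ T, if Disjoint S I then norm2sq μ (F S) else 0)
            = ((n - S.card).choose m : ℝ) * norm2sq μ (F S) := by
        intro S
        rw [← Finset.sum_filter]
        have hfilt : T.filter (fun I => Disjoint S I) = Finset.powersetCard m Sᶜ := by
          ext J
          simp only [Finset.mem_filter, hT, Finset.mem_powersetCard, Finset.subset_univ,
            true_and]
          constructor
          · rintro ⟨hcard, hdisj⟩
            refine ⟨?_, hcard⟩
            intro i hiJ
            exact Finset.mem_compl.mpr fun hiS => Finset.disjoint_left.mp hdisj hiS hiJ
          · rintro ⟨hsub, hcard⟩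
            refine ⟨hcard, Finset.disjoint_left.mpr fun i hiS hiJ => ?_⟩
            exact (Finset.mem_compl.mp (hsub hiJ)) hiS
        rw [hfilt, Finset.sum_const, Finset.card_powersetCard, Finset.card_compl,
          Fintype.card_fin, nsmul_eq_mul]
      have hlow : ∀ S ∈ Finset.univ.filter (fun S : Finset (Fin n) => S.card ≤ d),
          (2 / 7) * (n.choose m : ℝ) * norm2sq μ (F S)
            ≤ (∑ I ∈ T, if Disjoint S I then norm2sq μ (F S) else 0) := by
        intro S hS
        rw [hcount S]
        have hcardS : S.card ≤ d := (Finset.mem_filter.mp hS).2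
        have := choose_ratio hd hn8 hm_up hcardS
        exact mul_le_mul_of_nonneg_right this (hn2nonneg S) |>.trans_eq rfl
      calc (2 / 7) * (n.choose m : ℝ) * ξ
          ≤ (2 / 7) * (n.choose m : ℝ)
              * ∑ S ∈ Finset.univ.filter (fun S : Finset (Fin n) => S.card ≤ d),
                  norm2sq μ (F S) := by
            refine mul_le_mul_of_nonneg_left hweight ?_
            positivity
        _ = ∑ S ∈ Finset.univ.filter (fun S : Finset (Fin n) => S.card ≤ d),
              (2 / 7) * (n.choose m : ℝ) * norm2sq μ (F S) := by
            rw [Finset.mul_sum]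
        _ ≤ ∑ S ∈ Finset.univ.filter (fun S : Finset (Fin n) => S.card ≤ d),
              ∑ I ∈ T, if Disjoint S I then norm2sq μ (F S) else 0 :=
            Finset.sum_le_sum hlow
    exact le_trans step2 (Finset.sum_le_sum step1)
  -- positive part extraction
  have hkey : ∃ I ∈ T, ∃ x : Fin n → Ω, ξ / 7 ≤ max (R I x - α) 0 := by
    by_contra hcon
    push_neg at hcon
    have hptw : ∀ I ∈ T, ∀ x : Fin n → Ω,
        wtp μ x * (R I x - α) ^ 2 ≤ wtp μ x * (2 * max (R I x - α) 0 - (R I x - α)) := by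
      intro I _ x
      refine mul_le_mul_of_nonneg_left ?_ (wtp_pos hpos x).le
      have hXub : R I x - α ≤ 1 := by have := hR1 I x; linarith
      have hXlb : -1 ≤ R I x - α := by have := hR0 I x; linarith
      rcases le_or_gt 0 (R I x - α) with h | h
      · rw [max_eq_left h]
        nlinarith
      · rw [max_eq_right h.le]
        nlinarith
    have hub : ∑ I ∈ T, ∑ x, wtp μ x * (R I x - α) ^ 2
        ≤ 2 * ∑ I ∈ T, ∑ x, wtp μ x * max (R I x - α) 0 := by
      calc ∑ I ∈ T, ∑ x, wtp μ x * (R I x - α) ^ 2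
          ≤ ∑ I ∈ T, ∑ x, wtp μ x * (2 * max (R I x - α) 0 - (R I x - α)) :=
            Finset.sum_le_sum fun I hI => Finset.sum_le_sum fun x _ => hptw I hI x
        _ = ∑ I ∈ T, ((2 * ∑ x, wtp μ x * max (R I x - α) 0)
              - ∑ x, wtp μ x * (R I x - α)) := by
            refine Finset.sum_congr rfl fun I _ => ?_
            rw [Finset.mul_sum, ← Finset.sum_sub_distrib]
            refine Finset.sum_congr rfl fun x _ => by ring
        _ = ∑ I ∈ T, 2 * ∑ x, wtp μ x * max (R I x - α) 0 := by
            refine Finset.sum_congr rfl fun I _ => ?_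
            rw [hmean I]
            ring
        _ = 2 * ∑ I ∈ T, ∑ x, wtp μ x * max (R I x - α) 0 := by
            rw [Finset.mul_sum]
    have hlb2 : (1 / 7) * (n.choose m : ℝ) * ξ
        ≤ ∑ I ∈ T, ∑ x, wtp μ x * max (R I x - α) 0 := by
      nlinarith [hsum_T, hub]
    have hsmall : ∀ I ∈ T, (∑ x, wtp μ x * max (R I x - α) 0) < ξ / 7 := by
      intro I hI
      have h1 : ∀ x : Fin n → Ω, wtp μ x * max (R I x - α) 0 < wtp μ x * (ξ / 7) :=
        fun x => mul_lt_mul_of_pos_left (hcon I hI x) (wtp_pos hpos x)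
      calc ∑ x, wtp μ x * max (R I x - α) 0
          < ∑ x : Fin n → Ω, wtp μ x * (ξ / 7) :=
            Finset.sum_lt_sum_of_nonempty Finset.univ_nonempty fun x _ => h1 x
        _ = (∑ x : Fin n → Ω, wtp μ x) * (ξ / 7) := by rw [Finset.sum_mul]
        _ = ξ / 7 := by rw [hwt1, one_mul]
    have hstrict : ∑ I ∈ T, ∑ x, wtp μ x * max (R I x - α) 0
        < ∑ I ∈ T, (ξ / 7 : ℝ) :=
      Finset.sum_lt_sum_of_nonempty hTne hsmall
    rw [Finset.sum_const, nsmul_eq_mul, hTcard] at hstrict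
    nlinarith [hstrict, hlb2]
  obtain ⟨I, hIT, x, hx⟩ := hkey
  have hIcard : I.card = m := (Finset.mem_powersetCard.mp hIT).2
  have hXpos : ξ / 7 ≤ R I x - α := by
    rcases le_max_iff.mp hx with h | h
    · exact h
    · exfalso; nlinarith
  refine ⟨I, x, ?_, ?_⟩
  · rw [hIcard]
    exact hm_low
  · have h47 : ξ / (4 * Real.exp 1) ≤ ξ / 7 := by
      have he : (7 : ℝ) ≤ 4 * Real.exp 1 := by
        nlinarith [Real.exp_one_gt_d9]
      exact div_le_div_of_nonneg_left hξ0.le (by norm_num) he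
    have : α + ξ / (4 * Real.exp 1) ≤ R I x := by linarith
    exact this


end
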